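/- arXiv:0711.3049 — 2 statements merged into one kernel-verified Lean document; each statement's English description precedes it below -/
import Mathlib

section
/- (Northeast Lemma) Let G be a graph on n vertices and suppose A is a real symmetric matrix in S(G) with π(A) = p and ν(A) = q. Then for every pair of nonnegative integers r ≥ p and s ≥ q with r + s ≤ n, there exists a real symmetric matrix B in S(G) with π(B) = r and ν(B) = s. -/
open Matrix

/-- Number of positive eigenvalues (with multiplicity) of a real symmetric matrix. -/
noncomputable def posIn {m : ℕ} {A : Matrix (Fin m) (Fin m) ℝ} (hA : A.IsHermitian) : ℕ :=
  Finset.card (Finset.univ.filter fun i => 0 < hA.eigenvalues i)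

/-- Number of negative eigenvalues (with multiplicity) of a real symmetric matrix. -/
noncomputable def negIn {m : ℕ} {A : Matrix (Fin m) (Fin m) ℝ} (hA : A.IsHermitian) : ℕ :=
  Finset.card (Finset.univ.filter fun i => hA.eigenvalues i < 0)

/-- `A` has partial inertia `(r, s)`. -/
def HasInertia {m : ℕ} (A : Matrix (Fin m) (Fin m) ℝ) (r s : ℕ) : Prop :=
  ∃ hA : A.IsHermitian, posIn hA = r ∧ negIn hA = s

/-- `A` is a real symmetric matrix whose off-diagonal zero–nonzero pattern is
given by the edges of the graph `G`. -/
def SMat {m : ℕ} (G : SimpleGraph (Fin m)) (A : Matrix (Fin m) (Fin m) ℝ) : Prop :=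
  A.IsSymm ∧ ∀ i j : Fin m, i ≠ j → (A i j ≠ 0 ↔ G.Adj i j)

namespace NE

open Module

variable {m : ℕ}

noncomputable abbrev qf (A : Matrix (Fin m) (Fin m) ℝ) (x : EuclideanSpace ℝ (Fin m)) : ℝ :=
  (x : Fin m → ℝ) ⬝ᵥ (A *ᵥ (x : Fin m → ℝ))

lemma apply_eq_sum_repr (b : OrthonormalBasis (Fin m) ℝ (EuclideanSpace ℝ (Fin m)))
    (x : EuclideanSpace ℝ (Fin m)) (i : Fin m) :
    x i = ∑ j, b.repr x j * (b j) i := by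
  have hx : (∑ j, b.repr x j • b j) = x := b.sum_repr x
  calc x i = (∑ j, b.repr x j • b j) i := by rw [hx]
    _ = ∑ j, (b.repr x j • b j) i := by rw [WithLp.ofLp_sum, Finset.sum_apply]
    _ = ∑ j, b.repr x j * (b j) i := rfl

lemma qf_eq_sum {A : Matrix (Fin m) (Fin m) ℝ} (hA : A.IsHermitian) (x : EuclideanSpace ℝ (Fin m)) :
    qf A x = ∑ j, hA.eigenvalues j * (hA.eigenvectorBasis.repr x j)^2 := by
  set b := hA.eigenvectorBasis with hb
  set c : Fin m → ℝ := fun j => b.repr x j with hc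
  have hfun : ∀ i, x i = ∑ j, c j * (b j) i := fun i => apply_eq_sum_repr b x i
  have heig : ∀ j i, (∑ k, A i k * (b j) k) = hA.eigenvalues j * (b j) i := by
    intro j i
    have h1 := congrFun (hA.mulVec_eigenvectorBasis j) i
    simpa [mulVec, dotProduct] using h1
  have hmul : ∀ i, (A *ᵥ (x : Fin m → ℝ)) i = ∑ j, c j * (hA.eigenvalues j * (b j) i) := by
    intro i
    simp only [mulVec, dotProduct]
    calc (∑ k, A i k * x k) = ∑ k, ∑ j, A i k * (c j * (b j) k) := by
          congr 1; ext k; rw [hfun k, Finset.mul_sum]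
      _ = ∑ j, ∑ k, A i k * (c j * (b j) k) := Finset.sum_comm
      _ = ∑ j, c j * (hA.eigenvalues j * (b j) i) := by
          congr 1; ext j
          rw [← heig j i, Finset.mul_sum]
          congr 1; ext k; ring
  have hinner : ∀ j, (∑ i, x i * (b j) i) = c j := by
    intro j
    have h2 : (inner ℝ (b j) x : ℝ) = c j := (b.repr_apply_apply x j).symm
    rw [← h2]
    rw [real_inner_comm]
    simp [EuclideanSpace.inner_eq_star_dotProduct, dotProduct, star, mul_comm]
  calc qf A x = ∑ i, x i * ∑ j, c j * (hA.eigenvalues j * (b j) i) := by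
        simp only [qf, dotProduct]
        congr 1; ext i; rw [hmul i]
    _ = ∑ i, ∑ j, c j * hA.eigenvalues j * (x i * (b j) i) := by
        congr 1; ext i; rw [Finset.mul_sum]; congr 1; ext j; ring
    _ = ∑ j, c j * hA.eigenvalues j * (∑ i, x i * (b j) i) := by
        rw [Finset.sum_comm]
        congr 1; ext j; rw [Finset.mul_sum]
    _ = ∑ j, hA.eigenvalues j * (c j)^2 := by
        congr 1; ext j; rw [hinner j]; ring

lemma repr_zero_of_mem_span {b : OrthonormalBasis (Fin m) ℝ (EuclideanSpace ℝ (Fin m))}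
    {S : Finset (Fin m)} {x : EuclideanSpace ℝ (Fin m)}
    (hx : x ∈ Submodule.span ℝ (b '' (S : Set (Fin m)))) {j : Fin m} (hj : j ∉ S) :
    b.repr x j = 0 := by
  have key : ∀ y ∈ Submodule.span ℝ (b '' (S : Set (Fin m))), (inner ℝ (b j) y : ℝ) = 0 := by
    intro y hy
    refine Submodule.span_induction ?_ ?_ ?_ ?_ hy
    · rintro z ⟨k, hk, rfl⟩
      have hne : j ≠ k := by rintro rfl; exact hj hk
      exact b.orthonormal.2 hne
    · simp
    · intro y z _ _ hy hz; rw [inner_add_right, hy, hz, add_zero]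
    · intro a y _ hy; rw [inner_smul_right, hy, mul_zero]
  rw [b.repr_apply_apply]
  exact key x hx

lemma finrank_span_image {b : OrthonormalBasis (Fin m) ℝ (EuclideanSpace ℝ (Fin m))}
    (S : Finset (Fin m)) :
    finrank ℝ (Submodule.span ℝ (b '' (S : Set (Fin m)))) = S.card := by
  have hli : LinearIndependent ℝ (fun k : S => b (k : Fin m)) :=
    b.orthonormal.linearIndependent.comp _ Subtype.val_injective
  have himg : Set.range (fun k : S => b (k : Fin m)) = b '' (S : Set (Fin m)) := by
    ext z; simp [Set.mem_image]
  rw [← himg, finrank_span_eq_card hli, Fintype.card_coe]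

def PosDefOn (A : Matrix (Fin m) (Fin m) ℝ) (W : Submodule ℝ (EuclideanSpace ℝ (Fin m))) : Prop :=
  ∀ x ∈ W, x ≠ 0 → 0 < qf A x

def NegDefOn (A : Matrix (Fin m) (Fin m) ℝ) (W : Submodule ℝ (EuclideanSpace ℝ (Fin m))) : Prop :=
  ∀ x ∈ W, x ≠ 0 → qf A x < 0

lemma exists_ne_zero_mem_inf {W V : Submodule ℝ (EuclideanSpace ℝ (Fin m))}
    (h : m < finrank ℝ W + finrank ℝ V) :
    ∃ x ∈ (W ⊓ V : Submodule ℝ (EuclideanSpace ℝ (Fin m))), x ≠ 0 := by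
  have htot : finrank ℝ (EuclideanSpace ℝ (Fin m)) = m := by simp
  have hsup : finrank ℝ (W ⊔ V : Submodule ℝ (EuclideanSpace ℝ (Fin m))) ≤ m :=
    le_trans (Submodule.finrank_le _) (le_of_eq htot)
  have hinf : 0 < finrank ℝ (W ⊓ V : Submodule ℝ (EuclideanSpace ℝ (Fin m))) := by
    have := Submodule.finrank_sup_add_finrank_inf_eq W V
    omega
  by_contra hc
  push_neg at hc
  have hbot : (W ⊓ V : Submodule ℝ (EuclideanSpace ℝ (Fin m))) = ⊥ := by
    rw [Submodule.eq_bot_iff]; exact hc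
  rw [hbot] at hinf; simp at hinf

/-- P2 -/
lemma posDefOn_le {A : Matrix (Fin m) (Fin m) ℝ} (hA : A.IsHermitian)
    {W : Submodule ℝ (EuclideanSpace ℝ (Fin m))} (hW : PosDefOn A W) :
    finrank ℝ W ≤ posIn hA := by
  by_contra hlt
  push_neg at hlt
  set S : Finset (Fin m) := Finset.univ.filter (fun j => ¬ 0 < hA.eigenvalues j) with hS
  have hVrank : finrank ℝ (Submodule.span ℝ (hA.eigenvectorBasis '' (S : Set (Fin m)))) = S.card :=
    finrank_span_image S
  have hcards : posIn hA + S.card = m := by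
    have := Finset.card_filter_add_card_filter_not (s := Finset.univ)
      (p := fun j : Fin m => 0 < hA.eigenvalues j)
    simpa [posIn, hS] using this
  obtain ⟨x, hxWV, hx0⟩ := exists_ne_zero_mem_inf
    (W := W) (V := Submodule.span ℝ (hA.eigenvectorBasis '' (S : Set (Fin m)))) (by omega)
  have hpos : 0 < qf A x := hW x hxWV.1 hx0
  have hnonpos : qf A x ≤ 0 := by
    rw [qf_eq_sum hA]
    apply Finset.sum_nonpos
    intro j _
    by_cases hj : j ∈ S
    · have hl : hA.eigenvalues j ≤ 0 := le_of_not_gt (by simpa [hS] using hj)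
      have := sq_nonneg (hA.eigenvectorBasis.repr x j)
      nlinarith
    · rw [repr_zero_of_mem_span hxWV.2 hj]
      simp
  linarith

/-- P1 -/
lemma exists_posDefOn {A : Matrix (Fin m) (Fin m) ℝ} (hA : A.IsHermitian) :
    ∃ W : Submodule ℝ (EuclideanSpace ℝ (Fin m)), finrank ℝ W = posIn hA ∧ PosDefOn A W := by
  set S : Finset (Fin m) := Finset.univ.filter (fun j => 0 < hA.eigenvalues j) with hS
  refine ⟨Submodule.span ℝ (hA.eigenvectorBasis '' (S : Set (Fin m))), finrank_span_image S, ?_⟩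
  intro x hx hx0
  rw [qf_eq_sum hA]
  have hterm : ∀ j ∈ Finset.univ, 0 ≤ hA.eigenvalues j * (hA.eigenvectorBasis.repr x j)^2 := by
    intro j _
    by_cases hj : j ∈ S
    · have : 0 < hA.eigenvalues j := by simpa [hS] using hj
      positivity
    · rw [repr_zero_of_mem_span hx hj]; simp
  have hex : ∃ j ∈ Finset.univ, 0 < hA.eigenvalues j * (hA.eigenvectorBasis.repr x j)^2 := by
    obtain ⟨j, hj⟩ : ∃ j, hA.eigenvectorBasis.repr x j ≠ 0 := by
      by_contra hc; push_neg at hc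
      apply hx0
      have h0 : hA.eigenvectorBasis.repr x = 0 := by ext j; simpa using hc j
      simpa using hA.eigenvectorBasis.repr.injective (by simpa using h0)
    have hjS : j ∈ S := by
      by_contra hc; exact hj (repr_zero_of_mem_span hx hc)
    have hlam : 0 < hA.eigenvalues j := by simpa [hS] using hjS
    exact ⟨j, Finset.mem_univ j, by positivity⟩
  exact Finset.sum_pos' hterm hex

/-- N2 -/
lemma negDefOn_le {A : Matrix (Fin m) (Fin m) ℝ} (hA : A.IsHermitian)
    {W : Submodule ℝ (EuclideanSpace ℝ (Fin m))} (hW : NegDefOn A W) :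
    finrank ℝ W ≤ negIn hA := by
  by_contra hlt
  push_neg at hlt
  set S : Finset (Fin m) := Finset.univ.filter (fun j => ¬ hA.eigenvalues j < 0) with hS
  have hVrank : finrank ℝ (Submodule.span ℝ (hA.eigenvectorBasis '' (S : Set (Fin m)))) = S.card :=
    finrank_span_image S
  have hcards : negIn hA + S.card = m := by
    have := Finset.card_filter_add_card_filter_not (s := Finset.univ)
      (p := fun j : Fin m => hA.eigenvalues j < 0)
    simpa [negIn, hS] using this
  obtain ⟨x, hxWV, hx0⟩ := exists_ne_zero_mem_inf
    (W := W) (V := Submodule.span ℝ (hA.eigenvectorBasis '' (S : Set (Fin m)))) (by omega)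
  have hneg : qf A x < 0 := hW x hxWV.1 hx0
  have hnonneg : 0 ≤ qf A x := by
    rw [qf_eq_sum hA]
    apply Finset.sum_nonneg
    intro j _
    by_cases hj : j ∈ S
    · have hl : 0 ≤ hA.eigenvalues j := le_of_not_gt (by simpa [hS] using hj)
      have := sq_nonneg (hA.eigenvectorBasis.repr x j)
      nlinarith
    · rw [repr_zero_of_mem_span hxWV.2 hj]
      simp
  linarith

/-- N1 -/
lemma exists_negDefOn {A : Matrix (Fin m) (Fin m) ℝ} (hA : A.IsHermitian) :
    ∃ W : Submodule ℝ (EuclideanSpace ℝ (Fin m)), finrank ℝ W = negIn hA ∧ NegDefOn A W := by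
  set S : Finset (Fin m) := Finset.univ.filter (fun j => hA.eigenvalues j < 0) with hS
  refine ⟨Submodule.span ℝ (hA.eigenvectorBasis '' (S : Set (Fin m))), finrank_span_image S, ?_⟩
  intro x hx hx0
  rw [qf_eq_sum hA]
  have hterm : ∀ j ∈ Finset.univ, hA.eigenvalues j * (hA.eigenvectorBasis.repr x j)^2 ≤ 0 := by
    intro j _
    by_cases hj : j ∈ S
    · have : hA.eigenvalues j < 0 := by simpa [hS] using hj
      nlinarith [sq_nonneg (hA.eigenvectorBasis.repr x j)]
    · rw [repr_zero_of_mem_span hx hj]; simp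
  have hex : ∃ j ∈ Finset.univ, hA.eigenvalues j * (hA.eigenvectorBasis.repr x j)^2 < 0 := by
    obtain ⟨j, hj⟩ : ∃ j, hA.eigenvectorBasis.repr x j ≠ 0 := by
      by_contra hc; push_neg at hc
      apply hx0
      have h0 : hA.eigenvectorBasis.repr x = 0 := by ext j; simpa using hc j
      simpa using hA.eigenvectorBasis.repr.injective (by simpa using h0)
    have hjS : j ∈ S := by
      by_contra hc; exact hj (repr_zero_of_mem_span hx hc)
    have hlam : hA.eigenvalues j < 0 := by simpa [hS] using hjS
    refine ⟨j, Finset.mem_univ j, ?_⟩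
    have h2 : 0 < (hA.eigenvectorBasis.repr x j)^2 := by positivity
    nlinarith
  exact Finset.sum_neg' hterm hex

lemma isHermitian_of_isSymm {A : Matrix (Fin m) (Fin m) ℝ} (h : A.IsSymm) : A.IsHermitian := by
  rw [Matrix.IsHermitian]
  ext i j
  have := congrFun (congrFun h i) j
  simpa [Matrix.conjTranspose_apply, Matrix.transpose_apply] using this

lemma qf_neg (A : Matrix (Fin m) (Fin m) ℝ) (x : EuclideanSpace ℝ (Fin m)) :
    qf (-A) x = - qf A x := by
  simp [qf, Matrix.neg_mulVec, dotProduct_neg]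

lemma qf_add_std (A : Matrix (Fin m) (Fin m) ℝ) (i : Fin m) (ε : ℝ)
    (x : EuclideanSpace ℝ (Fin m)) :
    qf (A + Matrix.single i i ε) x = qf A x + ε * (x i)^2 := by
  simp only [qf, Matrix.add_mulVec, dotProduct_add]
  congr 1
  have hv : (Matrix.single i i ε *ᵥ (x : Fin m → ℝ)) = fun j => if j = i then ε * x i else 0 := by
    ext j
    simp only [mulVec, dotProduct, Matrix.single]
    rw [Finset.sum_eq_single i]
    · by_cases h : j = i
      · simp [h]
      · rw [if_neg h]
        have : ¬ (i = j ∧ i = i) := by tauto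
        rw [Matrix.of_apply, if_neg this, zero_mul]
    · intro k _ hk; simp [Ne.symm hk]
    · simp
  rw [hv]
  simp only [dotProduct]
  rw [Finset.sum_eq_single i]
  · simp; ring
  · intro k _ hk; simp [hk]
  · simp

lemma stdBasisMatrix_isSymm (i : Fin m) (ε : ℝ) : (Matrix.single i i ε).IsSymm := by
  ext j k
  simp only [Matrix.transpose_apply, Matrix.single]
  by_cases h1 : i = j <;> by_cases h2 : i = k <;> simp [h1, h2]

lemma parseval {b : OrthonormalBasis (Fin m) ℝ (EuclideanSpace ℝ (Fin m))}
    (x : EuclideanSpace ℝ (Fin m)) :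
    ∑ j, (b.repr x j)^2 = ∑ i, (x i)^2 := by
  have h1 : ‖b.repr x‖ = ‖x‖ := b.repr.norm_map x
  have h2 : ‖b.repr x‖^2 = ∑ j, (b.repr x j)^2 := by
    rw [EuclideanSpace.norm_eq, Real.sq_sqrt (by positivity)]
    simp [sq_abs]
  have h3 : ‖x‖^2 = ∑ i, (x i)^2 := by
    rw [EuclideanSpace.norm_eq, Real.sq_sqrt (by positivity)]
    simp [sq_abs]
  rw [← h2, ← h3, h1]

lemma posIn_neg {A : Matrix (Fin m) (Fin m) ℝ} (hA : A.IsHermitian) (hA' : (-A).IsHermitian) :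
    posIn hA' = negIn hA := by
  apply le_antisymm
  · obtain ⟨W, hWrank, hWpos⟩ := exists_posDefOn hA'
    have hnd : NegDefOn A W := by
      intro x hx h0
      have := hWpos x hx h0
      rw [qf_neg] at this
      linarith
    calc posIn hA' = finrank ℝ W := hWrank.symm
      _ ≤ negIn hA := negDefOn_le hA hnd
  · obtain ⟨W, hWrank, hWneg⟩ := exists_negDefOn hA
    have hpd : PosDefOn (-A) W := by
      intro x hx h0
      rw [qf_neg]
      have := hWneg x hx h0
      linarith
    calc negIn hA = finrank ℝ W := hWrank.symm
      _ ≤ posIn hA' := posDefOn_le hA' hpd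

lemma negIn_neg {A : Matrix (Fin m) (Fin m) ℝ} (hA : A.IsHermitian) (hA' : (-A).IsHermitian) :
    negIn hA' = posIn hA := by
  apply le_antisymm
  · obtain ⟨W, hWrank, hWneg⟩ := exists_negDefOn hA'
    have hpd : PosDefOn A W := by
      intro x hx h0
      have := hWneg x hx h0
      rw [qf_neg] at this
      linarith
    calc negIn hA' = finrank ℝ W := hWrank.symm
      _ ≤ posIn hA := posDefOn_le hA hpd
  · obtain ⟨W, hWrank, hWpos⟩ := exists_posDefOn hA
    have hnd : NegDefOn (-A) W := by
      intro x hx h0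
      rw [qf_neg]
      have := hWpos x hx h0
      linarith
    calc posIn hA = finrank ℝ W := hWrank.symm
      _ ≤ negIn hA' := negDefOn_le hA' hnd

lemma exists_zero_eigenvalue {A : Matrix (Fin m) (Fin m) ℝ} (hA : A.IsHermitian)
    (h : posIn hA + negIn hA < m) : ∃ j0, hA.eigenvalues j0 = 0 := by
  by_contra hc
  push_neg at hc
  have hfe : Finset.univ.filter (fun j => ¬ 0 < hA.eigenvalues j)
      = Finset.univ.filter (fun j => hA.eigenvalues j < 0) := by
    apply Finset.filter_congr
    intro j _
    constructor
    · intro hnp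
      exact lt_of_le_of_ne (le_of_not_gt hnp) (hc j)
    · intro hlt
      exact not_lt_of_gt hlt
  have hcards := Finset.card_filter_add_card_filter_not (s := Finset.univ)
      (p := fun j : Fin m => 0 < hA.eigenvalues j)
  rw [hfe] at hcards
  have : posIn hA + negIn hA = m := by simpa [posIn, negIn] using hcards
  omega

lemma step_pos {A : Matrix (Fin m) (Fin m) ℝ} (hA : A.IsHermitian)
    (h : posIn hA + negIn hA < m) :
    ∃ (i : Fin m) (ε : ℝ),
      HasInertia (A + Matrix.single i i ε) (posIn hA + 1) (negIn hA) := by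
  obtain ⟨j0, hj0⟩ := exists_zero_eigenvalue hA h
  have hv0 : hA.eigenvectorBasis j0 ≠ 0 := hA.eigenvectorBasis.orthonormal.ne_zero j0
  obtain ⟨i, hvi⟩ : ∃ i, (hA.eigenvectorBasis j0) i ≠ 0 := by
    by_contra hcon
    push_neg at hcon
    apply hv0
    ext i
    simpa using hcon i
  -- choose ε
  set negs : Finset (Fin m) := Finset.univ.filter (fun j => hA.eigenvalues j < 0) with hnegs
  set δ : ℝ := if hne : negs.Nonempty then negs.inf' hne (fun j => -hA.eigenvalues j) else 1
    with hδ
  have hδpos : 0 < δ := by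
    rw [hδ]
    split
    · rename_i hne
      rw [Finset.lt_inf'_iff]
      intro j hj
      have : hA.eigenvalues j < 0 := by
        rw [hnegs] at hj; simpa using hj
      linarith
    · norm_num
  set ε : ℝ := δ / 2 with hε
  have hεpos : 0 < ε := by rw [hε]; linarith
  have hεneg : ∀ j, hA.eigenvalues j < 0 → hA.eigenvalues j + ε < 0 := by
    intro j hj
    have hjn : j ∈ negs := by rw [hnegs]; simp [hj]
    have hne : negs.Nonempty := ⟨j, hjn⟩
    have hle : δ ≤ -hA.eigenvalues j := by
      rw [hδ, dif_pos hne]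
      exact Finset.inf'_le _ hjn
    rw [hε]
    linarith
  set B : Matrix (Fin m) (Fin m) ℝ := A + Matrix.single i i ε with hB
  have hBh : B.IsHermitian :=
    Matrix.IsHermitian.add hA (isHermitian_of_isSymm (stdBasisMatrix_isSymm i ε))
  have hqB : ∀ x : EuclideanSpace ℝ (Fin m), qf B x = qf A x + ε * (x i)^2 := by
    intro x; rw [hB]; exact qf_add_std A i ε x
  -- lower bound for posIn
  have hlow : posIn hA + 1 ≤ posIn hBh := by
    set S : Finset (Fin m) := insert j0 (Finset.univ.filter (fun j => 0 < hA.eigenvalues j))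
      with hS
    have hj0nmem : j0 ∉ Finset.univ.filter (fun j => 0 < hA.eigenvalues j) := by
      simp [hj0]
    have hcard : S.card = posIn hA + 1 := by
      rw [hS, Finset.card_insert_of_notMem hj0nmem]
      simp [posIn]
    have hpd : PosDefOn B (Submodule.span ℝ (hA.eigenvectorBasis '' (S : Set (Fin m)))) := by
      intro x hx hx0
      by_cases hcase : ∀ j, 0 < hA.eigenvalues j → hA.eigenvectorBasis.repr x j = 0
      · have hzero : ∀ j, j ≠ j0 → hA.eigenvectorBasis.repr x j = 0 := by
          intro j hne
          by_cases hj : j ∈ S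
          · rw [hS, Finset.mem_insert] at hj
            rcases hj with hj | hj
            · exact absurd hj hne
            · exact hcase j (by simpa using hj)
          · exact repr_zero_of_mem_span hx hj
        have hq0 : qf A x = 0 := by
          rw [qf_eq_sum hA]
          apply Finset.sum_eq_zero
          intro j _
          by_cases hje : j = j0
          · rw [hje, hj0]; ring
          · rw [hzero j hje]; ring
        have hc0 : hA.eigenvectorBasis.repr x j0 ≠ 0 := by
          intro hcc
          apply hx0
          have h0 : hA.eigenvectorBasis.repr x = 0 := by
            ext j
            by_cases hje : j = j0
            · rw [hje]; simpa using hcc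
            · simpa using hzero j hje
          simpa using hA.eigenvectorBasis.repr.injective (by simpa using h0)
        have hxi : x i = hA.eigenvectorBasis.repr x j0 * (hA.eigenvectorBasis j0) i := by
          rw [apply_eq_sum_repr hA.eigenvectorBasis x i]
          rw [Finset.sum_eq_single j0]
          · intro k _ hk
            rw [hzero k hk, zero_mul]
          · intro hmem
            exact absurd (Finset.mem_univ j0) hmem
        have h2 : 0 < (hA.eigenvectorBasis.repr x j0 * (hA.eigenvectorBasis j0) i)^2 :=
          lt_of_le_of_ne (sq_nonneg _) (Ne.symm (pow_ne_zero 2 (mul_ne_zero hc0 hvi)))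
        rw [hqB x, hq0, hxi, zero_add]
        exact mul_pos hεpos h2
      · push_neg at hcase
        obtain ⟨j1, hj1pos, hj1ne⟩ := hcase
        have hqA : 0 < qf A x := by
          rw [qf_eq_sum hA]
          apply Finset.sum_pos'
          · intro j _
            by_cases hj : j ∈ S
            · rw [hS, Finset.mem_insert] at hj
              rcases hj with hj | hj
              · rw [hj, hj0]; simp
              · have : 0 < hA.eigenvalues j := by simpa using hj
                positivity
            · rw [repr_zero_of_mem_span hx hj]; simp
          · refine ⟨j1, Finset.mem_univ j1, ?_⟩
            have h2 : 0 < (hA.eigenvectorBasis.repr x j1)^2 :=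
              lt_of_le_of_ne (sq_nonneg _) (Ne.symm (pow_ne_zero 2 hj1ne))
            exact mul_pos hj1pos h2
        have h3 : 0 ≤ ε * (x i)^2 := by positivity
        rw [hqB x]
        linarith
    calc posIn hA + 1 = S.card := hcard.symm
      _ = finrank ℝ (Submodule.span ℝ (hA.eigenvectorBasis '' (S : Set (Fin m)))) :=
          (finrank_span_image S).symm
      _ ≤ posIn hBh := posDefOn_le hBh hpd
  -- upper bound for posIn
  have hup : posIn hBh ≤ posIn hA + 1 := by
    obtain ⟨W', hWrank, hWpos⟩ := exists_posDefOn hBh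
    set f : W' →ₗ[ℝ] ℝ :=
      { toFun := fun y => (y : EuclideanSpace ℝ (Fin m)) i,
        map_add' := fun a b => rfl,
        map_smul' := fun c a => rfl } with hf
    have h1 := LinearMap.finrank_range_add_finrank_ker f
    have h2 : finrank ℝ (LinearMap.range f) ≤ 1 := by
      have := Submodule.finrank_le (LinearMap.range f)
      simpa using this
    have hW'' : PosDefOn A ((LinearMap.ker f).map W'.subtype) := by
      rintro x hxmem hx0
      rw [Submodule.mem_map] at hxmem
      obtain ⟨y, hy, rfl⟩ := hxmem
      have hyi : (y : EuclideanSpace ℝ (Fin m)) i = 0 := LinearMap.mem_ker.mp hy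
      have hq := hWpos _ y.2 hx0
      have heq : qf B (y : EuclideanSpace ℝ (Fin m)) = qf A (y : EuclideanSpace ℝ (Fin m)) := by
        rw [hqB, hyi]; ring
      have hco : (W'.subtype y : EuclideanSpace ℝ (Fin m)) = (y : EuclideanSpace ℝ (Fin m)) := rfl
      rw [hco, ← heq]
      exact hq
    have h3 := posDefOn_le hA hW''
    have hmap : finrank ℝ ((LinearMap.ker f).map W'.subtype) = finrank ℝ (LinearMap.ker f) :=
      Submodule.finrank_map_subtype_eq W' (LinearMap.ker f)
    omega
  -- negIn is preserved
  have hnlow : negIn hA ≤ negIn hBh := by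
    set S : Finset (Fin m) := Finset.univ.filter (fun j => hA.eigenvalues j < 0) with hS
    have hnd : NegDefOn B (Submodule.span ℝ (hA.eigenvectorBasis '' (S : Set (Fin m)))) := by
      intro x hx hx0
      have hxi2 : (x i)^2 ≤ ∑ j, (hA.eigenvectorBasis.repr x j)^2 := by
        rw [parseval]
        exact Finset.single_le_sum (fun k _ => sq_nonneg (x k)) (Finset.mem_univ i)
      have hsum : ∑ j, ((hA.eigenvalues j + ε) * (hA.eigenvectorBasis.repr x j)^2) < 0 := by
        apply Finset.sum_neg'
        · intro j _
          by_cases hj : j ∈ S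
          · have hlt : hA.eigenvalues j < 0 := by simpa [hS] using hj
            have := hεneg j hlt
            nlinarith [sq_nonneg (hA.eigenvectorBasis.repr x j)]
          · rw [repr_zero_of_mem_span hx hj]; ring_nf; simp
        · obtain ⟨j, hj⟩ : ∃ j, hA.eigenvectorBasis.repr x j ≠ 0 := by
            by_contra hcc; push_neg at hcc
            apply hx0
            have h0 : hA.eigenvectorBasis.repr x = 0 := by ext j; simpa using hcc j
            simpa using hA.eigenvectorBasis.repr.injective (by simpa using h0)
          have hjS : j ∈ S := by
            by_contra hcc; exact hj (repr_zero_of_mem_span hx hcc)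
          have hlt : hA.eigenvalues j < 0 := by simpa [hS] using hjS
          refine ⟨j, Finset.mem_univ j, ?_⟩
          have h2 : 0 < (hA.eigenvectorBasis.repr x j)^2 :=
            lt_of_le_of_ne (sq_nonneg _) (Ne.symm (pow_ne_zero 2 hj))
          have := hεneg j hlt
          nlinarith
      have hexp : ∑ j, ((hA.eigenvalues j + ε) * (hA.eigenvectorBasis.repr x j)^2)
          = qf A x + ε * ∑ j, (hA.eigenvectorBasis.repr x j)^2 := by
        rw [qf_eq_sum hA, Finset.mul_sum, ← Finset.sum_add_distrib]
        congr 1; ext j; ring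
      have : qf B x ≤ ∑ j, ((hA.eigenvalues j + ε) * (hA.eigenvectorBasis.repr x j)^2) := by
        rw [hqB x, hexp]
        have := mul_le_mul_of_nonneg_left hxi2 hεpos.le
        linarith
      linarith
    calc negIn hA = S.card := by simp [negIn, hS]
      _ = finrank ℝ (Submodule.span ℝ (hA.eigenvectorBasis '' (S : Set (Fin m)))) :=
          (finrank_span_image S).symm
      _ ≤ negIn hBh := negDefOn_le hBh hnd
  have hnup : negIn hBh ≤ negIn hA := by
    obtain ⟨W', hWrank, hWneg⟩ := exists_negDefOn hBh
    have hnd : NegDefOn A W' := by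
      intro x hx hx0
      have hq := hWneg x hx hx0
      have h3 : 0 ≤ ε * (x i)^2 := by positivity
      rw [hqB x] at hq
      linarith
    calc negIn hBh = finrank ℝ W' := hWrank.symm
      _ ≤ negIn hA := negDefOn_le hA hnd
  exact ⟨i, ε, hBh, le_antisymm hup hlow, le_antisymm hnup hnlow⟩

lemma smat_add_std {G : SimpleGraph (Fin m)} {A : Matrix (Fin m) (Fin m) ℝ}
    (hA : SMat G A) (i : Fin m) (ε : ℝ) : SMat G (A + Matrix.single i i ε) := by
  constructor
  · rw [Matrix.IsSymm, Matrix.transpose_add, hA.1, stdBasisMatrix_isSymm i ε]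
  · intro j k hjk
    have hE : Matrix.single i i ε j k = 0 := by
      apply Matrix.single_apply_of_ne
      rintro ⟨rfl, rfl⟩
      exact hjk rfl
    rw [Matrix.add_apply, hE, add_zero]
    exact hA.2 j k hjk

lemma neg_add_std (A : Matrix (Fin m) (Fin m) ℝ) (i : Fin m) (ε : ℝ) :
    -(-A + Matrix.single i i ε) = A + Matrix.single i i (-ε) := by
  ext j k
  simp only [Matrix.neg_apply, Matrix.add_apply, Matrix.single, Matrix.of_apply]
  by_cases h : i = j ∧ i = k
  · obtain ⟨rfl, rfl⟩ := h
    simp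
    ring
  · simp [h]

lemma hasInertia_neg {A : Matrix (Fin m) (Fin m) ℝ} {r s : ℕ} (h : HasInertia A r s) :
    HasInertia (-A) s r := by
  obtain ⟨hA, hp, hq⟩ := h
  have hA' : (-A).IsHermitian := hA.neg
  exact ⟨hA', by rw [posIn_neg hA hA', hq], by rw [negIn_neg hA hA', hp]⟩

lemma step_neg {A : Matrix (Fin m) (Fin m) ℝ} (hA : A.IsHermitian)
    (h : posIn hA + negIn hA < m) :
    ∃ (i : Fin m) (ε : ℝ),
      HasInertia (A + Matrix.single i i ε) (posIn hA) (negIn hA + 1) := by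
  have hA' : (-A).IsHermitian := hA.neg
  have h' : posIn hA' + negIn hA' < m := by
    rw [posIn_neg hA hA', negIn_neg hA hA']
    omega
  obtain ⟨i, ε, hI⟩ := step_pos hA' h'
  refine ⟨i, -ε, ?_⟩
  have := hasInertia_neg hI
  rw [neg_add_std A i ε] at this
  rw [posIn_neg hA hA', negIn_neg hA hA'] at this
  exact this

lemma main_aux {n : ℕ} (G : SimpleGraph (Fin n)) :
    ∀ k : ℕ, ∀ A : Matrix (Fin n) (Fin n) ℝ, SMat G A →
      ∀ p q : ℕ, HasInertia A p q → ∀ r s : ℕ, p ≤ r → q ≤ s → r + s ≤ n →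
        (r - p) + (s - q) = k →
        ∃ B : Matrix (Fin n) (Fin n) ℝ, SMat G B ∧ HasInertia B r s := by
  intro k
  induction k with
  | zero =>
    intro A hSA p q hI r s hr hs _ hk
    have hrp : r = p := by omega
    have hsq : s = q := by omega
    subst hrp; subst hsq
    exact ⟨A, hSA, hI⟩
  | succ k ih =>
    intro A hSA p q hI r s hr hs hrs hk
    obtain ⟨hAh, hp, hq⟩ := hI
    by_cases hpr : p < r
    · have hlt : posIn hAh + negIn hAh < n := by rw [hp, hq]; omega
      obtain ⟨i, ε, hIB⟩ := step_pos hAh hlt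
      rw [hp, hq] at hIB
      exact ih (A + Matrix.single i i ε) (smat_add_std hSA i ε) (p+1) q hIB
        r s (by omega) hs hrs (by omega)
    · have hqs : q < s := by omega
      have hlt : posIn hAh + negIn hAh < n := by rw [hp, hq]; omega
      obtain ⟨i, ε, hIB⟩ := step_neg hAh hlt
      rw [hp, hq] at hIB
      exact ih (A + Matrix.single i i ε) (smat_add_std hSA i ε) p (q+1) hIB
        r s hr (by omega) hrs (by omega)

end NE

/-- Northeast Lemma: any partial inertia northeast of an attained one (within
rank at most n) is attained in S(G). -/
theorem stmt3 {n : ℕ} (G : SimpleGraph (Fin n)) (A : Matrix (Fin n) (Fin n) ℝ)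
    (hA : SMat G A) (p q : ℕ) (hpq : HasInertia A p q) :
    ∀ r s : ℕ, p ≤ r → q ≤ s → r + s ≤ n →
      ∃ B : Matrix (Fin n) (Fin n) ℝ, SMat G B ∧ HasInertia B r s := by
  intro r s hr hs hrs
  exact NE.main_aux G ((r - p) + (s - q)) A hA p q hpq r s hr hs hrs rfl
end

section
/- Let G be a graph on n vertices and let ℓ be the number of connected components of G. Then the minimum rank over positive semidefinite matrices in S(G) equals n − ℓ if and only if G is a forest. -/
open Matrix

/-- Minimum rank over positive semidefinite matrices in S(G). -/
noncomputable def mrPlus {n : ℕ} (G : SimpleGraph (Fin n)) : ℕ :=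
  sInf {r | ∃ A : Matrix (Fin n) (Fin n) ℝ, SMat G A ∧ A.PosSemidef ∧ A.rank = r}


open SimpleGraph Module Submodule

variable {V : Type*} [Fintype V] [DecidableEq V]

/-- Walks between vertices different from a degree-≤1 vertex `v` can avoid `v`. -/
lemma reach_avoid {G : SimpleGraph V} {v u : V}
    (hdeg : ∀ x, G.Adj v x → x = u) :
    ∀ (N : ℕ) {a b : V} (w : G.Walk a b), w.length ≤ N → ∀ (ha : a ≠ v) (hb : b ≠ v),
      (G.comap (Subtype.val : {x // x ≠ v} → V)).Reachable ⟨a, ha⟩ ⟨b, hb⟩ := by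
  intro N
  induction N with
  | zero =>
    intro a b w hw ha hb
    cases w with
    | nil => exact Reachable.refl _
    | cons h w' => simp at hw
  | succ N ih =>
    intro a b w hw ha hb
    cases w with
    | nil => exact Reachable.refl _
    | @cons _ c _ h w' =>
      by_cases hc : c = v
      · subst hc
        have hau : a = u := hdeg a h.symm
        cases w' with
        | nil => exact absurd rfl hb
        | @cons _ d _ h2 w'' =>
          have hdu : d = u := hdeg d h2
          have had : a = d := hau.trans hdu.symm
          subst had
          have hlen : w''.length ≤ N := by
            simp only [Walk.length_cons] at hw; omega
          exact ih w'' hlen ha hb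
      · have hstep : (G.comap (Subtype.val : {x // x ≠ v} → V)).Adj ⟨a, ha⟩ ⟨c, hc⟩ := h
        have hlen : w'.length ≤ N := by
          simp only [Walk.length_cons] at hw; omega
        exact (hstep.reachable).trans (ih w' hlen hc hb)

lemma card_cc_erase_leaf {G : SimpleGraph V} {v u : V} (hadj : G.Adj v u)
    (hdeg : ∀ x, G.Adj v x → x = u) :
    Nat.card (G.comap (Subtype.val : {x // x ≠ v} → V)).ConnectedComponent
      = Nat.card G.ConnectedComponent := by
  set G' := G.comap (Subtype.val : {x // x ≠ v} → V) with hG'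
  let φ : G' →g G := ⟨Subtype.val, fun {x y} h => h⟩
  apply Nat.card_eq_of_bijective (ConnectedComponent.map φ)
  constructor
  · refine ConnectedComponent.ind₂ (fun a b h => ?_)
    simp only [ConnectedComponent.map_mk] at h
    obtain ⟨w⟩ := (ConnectedComponent.eq).mp h
    exact ConnectedComponent.sound (reach_avoid hdeg w.length w le_rfl a.2 b.2)
  · refine ConnectedComponent.ind (fun x => ?_)
    by_cases hx : x = v
    · subst hx
      refine ⟨G'.connectedComponentMk ⟨u, (hadj.ne).symm⟩, ?_⟩
      simp only [ConnectedComponent.map_mk]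
      exact ConnectedComponent.sound hadj.symm.reachable
    · exact ⟨G'.connectedComponentMk ⟨x, hx⟩, rfl⟩

lemma card_cc_edgeless {G : SimpleGraph V} (hE : ∀ a b, ¬G.Adj a b) :
    Nat.card G.ConnectedComponent = Fintype.card V := by
  rw [← Nat.card_eq_fintype_card]
  symm
  apply Nat.card_eq_of_bijective G.connectedComponentMk
  constructor
  · intro a b h
    obtain ⟨w⟩ := (ConnectedComponent.eq).mp h
    cases w with
    | nil => rfl
    | cons h _ => exact absurd h (hE _ _)
  · exact ConnectedComponent.ind (fun x => ⟨x, rfl⟩)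

lemma card_cc_deleteEdge {G : SimpleGraph V} {p r : V}
    (h : (G \ fromEdgeSet {s(p,r)}).Reachable p r) :
    Nat.card (G \ fromEdgeSet {s(p,r)}).ConnectedComponent = Nat.card G.ConnectedComponent := by
  set G₀ := G \ fromEdgeSet {s(p,r)} with hG₀
  have key : ∀ {a b : V}, G.Reachable a b → G₀.Reachable a b := by
    intro a b ⟨w⟩
    induction w with
    | nil => exact Reachable.refl _
    | @cons x y z hxy w' ih =>
      refine Reachable.trans ?_ ih
      by_cases he : s(x, y) = s(p, r)
      · rw [Sym2.eq_iff] at he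
        rcases he with ⟨rfl, rfl⟩ | ⟨rfl, rfl⟩
        · exact h
        · exact h.symm
      · exact Adj.reachable (by
          rw [hG₀, sdiff_adj]
          exact ⟨hxy, fun hf => he (by simpa using hf.1)⟩)
  apply Nat.card_eq_of_bijective (ConnectedComponent.map (Hom.ofLE sdiff_le))
  constructor
  · refine ConnectedComponent.ind₂ (fun a b hab => ?_)
    simp only [ConnectedComponent.map_mk, Hom.ofLE_apply] at hab
    exact ConnectedComponent.sound (key ((ConnectedComponent.eq).mp hab))
  · exact ConnectedComponent.ind (fun x => ⟨(G₀.connectedComponentMk x), rfl⟩)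
variable {V : Type*} [Fintype V] [DecidableEq V]

/-- A finite acyclic graph with an edge has a vertex of degree one. -/
lemma exists_leaf {G : SimpleGraph V} (hG : G.IsAcyclic) {x y : V} (hxy : G.Adj x y) :
    ∃ v u, G.Adj v u ∧ ∀ w, G.Adj v w → w = u := by
  classical
  set P : ℕ → Prop := fun k => ∃ (a b : V) (w : G.Walk a b), w.IsPath ∧ w.length = k with hP
  have hdec : DecidablePred P := fun _ => Classical.dec _
  have h1 : P 1 := by
    refine ⟨x, y, Walk.cons hxy Walk.nil, ?_, rfl⟩
    simp [Walk.cons_isPath_iff, hxy.ne]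
  have hcard : 1 ≤ Fintype.card V := Fintype.card_pos_iff.mpr ⟨x⟩
  set k := Nat.findGreatest P (Fintype.card V) with hk
  have hPk : P k := Nat.findGreatest_spec hcard h1
  have hk1 : 1 ≤ k := Nat.le_findGreatest hcard h1
  obtain ⟨a, b, w, hw, hlen⟩ := hPk
  have hmax : ¬ P (k + 1) := by
    apply Nat.findGreatest_is_greatest (lt_add_one k)
    have := hw.length_lt
    omega
  obtain ⟨q, hqp, hql⟩ : ∃ q : G.Walk b a, q.IsPath ∧ q.length = k :=
    ⟨w.reverse, hw.reverse, by simp [hlen]⟩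
  cases q with
  | nil => simp at hql; omega
  | @cons _ c _ hbc t =>
    rw [Walk.cons_isPath_iff] at hqp
    obtain ⟨htp, hbt⟩ := hqp
    refine ⟨b, c, hbc, fun w' hbw' => ?_⟩
    by_contra hne
    by_cases hsup : w' ∈ (Walk.cons hbc t).support
    · -- produce a cycle
      have hwb : w' ≠ b := (hbw'.ne).symm
      have t' := (Walk.cons hbc t).takeUntil w' hsup
      have ht'p : ((Walk.cons hbc t).takeUntil w' hsup).IsPath :=
        ((Walk.cons_isPath_iff hbc t).mpr ⟨htp, hbt⟩).takeUntil hsup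
      have hcyc : (Walk.cons (hbw'.symm) ((Walk.cons hbc t).takeUntil w' hsup)).IsCycle := by
        rw [Walk.cons_isCycle_iff]
        refine ⟨ht'p, fun he => ?_⟩
        have hsub := (Walk.cons hbc t).edges_takeUntil_subset hsup
        have : s(w', b) ∈ (Walk.cons hbc t).edges := hsub he
        rw [Walk.edges_cons] at this
        rcases List.mem_cons.mp this with h' | h'
        · rw [Sym2.eq_iff] at h'
          rcases h' with ⟨h1', h2'⟩ | ⟨h1', h2'⟩
          · exact hwb h1'
          · exact hne h1'
        · exact hbt (Walk.snd_mem_support_of_mem_edges t h')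
      exact hG _ hcyc
    · -- extend to a longer path
      apply hmax
      refine ⟨w', a, Walk.cons hbw'.symm (Walk.cons hbc t), ?_, ?_⟩
      · rw [Walk.cons_isPath_iff]
        exact ⟨(Walk.cons_isPath_iff hbc t).mpr ⟨htp, hbt⟩, hsup⟩
      · simp only [Walk.length_cons] at hql ⊢
        omega

lemma finrank_sup_span_singleton {W : Type*} [AddCommGroup W] [Module ℝ W]
    [FiniteDimensional ℝ W] (S : Submodule ℝ W) {x : W} (hx : x ∉ S) (hx0 : x ≠ 0) :
    finrank ℝ ↥(S ⊔ (ℝ ∙ x)) = finrank ℝ S + 1 := by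
  have hdisj : S ⊓ (ℝ ∙ x) = ⊥ :=
    ((Submodule.disjoint_span_singleton' hx0).mpr hx).eq_bot
  have := Submodule.finrank_sup_add_finrank_inf_eq S (ℝ ∙ x)
  rw [hdisj, finrank_bot, add_zero, finrank_span_singleton hx0] at this
  exact this

lemma dot_eq_zero_of_mem_span {κ : Type*} [Fintype κ] {x : κ → ℝ} {s : Set (κ → ℝ)}
    (h : ∀ y ∈ s, x ⬝ᵥ y = 0) {z : κ → ℝ} (hz : z ∈ Submodule.span ℝ s) : x ⬝ᵥ z = 0 := by
  induction hz using Submodule.span_induction with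
  | mem y hy => exact h y hy
  | zero => simp
  | add y w _ _ hy hw => rw [dotProduct_add, hy, hw, add_zero]
  | smul a y _ hy => rw [dotProduct_smul, hy, smul_zero]
lemma gram_card_le : ∀ (N : ℕ) (ι : Type) (_ : Fintype ι) (_ : DecidableEq ι),
    Fintype.card ι ≤ N →
    ∀ (G : SimpleGraph ι), G.IsAcyclic →
    ∀ (κ : Type) (_ : Fintype κ) (b : ι → (κ → ℝ)),
    (∀ i j : ι, i ≠ j → ((b i ⬝ᵥ b j) ≠ 0 ↔ G.Adj i j)) →
    Fintype.card ι ≤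
      finrank ℝ (Submodule.span ℝ (Set.range b)) + Nat.card G.ConnectedComponent := by
  intro N
  induction N with
  | zero =>
    intro ι _ _ hcard G _ κ _ b _
    omega
  | succ N ih =>
    intro ι _ _ hcard G hG κ _ b hpat
    by_cases hE : ∀ a b : ι, ¬G.Adj a b
    · rw [card_cc_edgeless hE]
      exact Nat.le_add_left _ _
    · push_neg at hE
      obtain ⟨x, y, hxy⟩ := hE
      obtain ⟨v, u, hadj, hdeg⟩ := exists_leaf hG hxy
      -- basic facts about b v
      have hbvu : b v ⬝ᵥ b u ≠ 0 := (hpat v u hadj.ne).mpr hadj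
      have hbv0 : b v ≠ 0 := by
        intro h
        apply hbvu
        rw [h, zero_dotProduct]
      have hbv : b v ⬝ᵥ b v ≠ 0 := by
        rwa [Ne, dotProduct_self_eq_zero]
      set ι' := {z : ι // z ≠ v} with hι'
      set G' := G.comap (Subtype.val : ι' → ι) with hG'def
      have hG' : G'.IsAcyclic := by
        intro w c hc
        exact hG _ (hc.map (f := (⟨Subtype.val, fun {a b} h => h⟩ : G' →g G))
          Subtype.val_injective)
      -- the projected vectors
      set c : ι → ℝ := fun i => (b v ⬝ᵥ b i) / (b v ⬝ᵥ b v) with hc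
      set b' : ι' → (κ → ℝ) := fun j => b ↑j - c ↑j • b v with hb'
      have hzero : ∀ i : ι, i ≠ v → i ≠ u → b v ⬝ᵥ b i = 0 := by
        intro i hiv hiu
        by_contra h
        exact hiu (hdeg i ((hpat v i (Ne.symm hiv)).mp h))
      have hb'eq : ∀ j : ι', (j : ι) ≠ u → b' j = b ↑j := by
        intro j hju
        simp only [hb', hc, hzero ↑j j.2 hju, zero_div, zero_smul, sub_zero]
      have hb'dot : ∀ i j : ι', i ≠ j → b' i ⬝ᵥ b' j = b ↑i ⬝ᵥ b ↑j := by
        intro i j hij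
        by_cases hiu : (i : ι) = u
        · have hju : (j : ι) ≠ u := by
            intro h; exact hij (Subtype.ext (hiu.trans h.symm))
          rw [hb'eq j hju]
          simp only [hb', hc, sub_dotProduct, smul_dotProduct, smul_eq_mul]
          rw [hzero ↑j j.2 hju]
          ring
        · rw [hb'eq i hiu]
          simp only [hb', hc, dotProduct_sub, dotProduct_smul, smul_eq_mul]
          rw [dotProduct_comm (b ↑i) (b v), hzero ↑i i.2 hiu]
          ring
      have hpat' : ∀ i j : ι', i ≠ j → ((b' i ⬝ᵥ b' j) ≠ 0 ↔ G'.Adj i j) := by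
        intro i j hij
        rw [hb'dot i j hij]
        exact hpat ↑i ↑j (fun h => hij (Subtype.ext h))
      -- orthogonality
      have horth : ∀ j : ι', b v ⬝ᵥ b' j = 0 := by
        intro j
        simp only [hb', hc, dotProduct_sub, dotProduct_smul, smul_eq_mul]
        rw [div_mul_cancel₀ _ hbv]
        ring
      -- spans
      set S' := Submodule.span ℝ (Set.range b') with hS'
      set S := Submodule.span ℝ (Set.range b) with hS
      have hbvS' : b v ∉ S' := by
        intro hmem
        exact hbv (dot_eq_zero_of_mem_span
          (by rintro y ⟨j, rfl⟩; exact horth j) hmem)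
      have hle : S' ⊔ (ℝ ∙ (b v)) ≤ S := by
        apply sup_le
        · rw [hS', Submodule.span_le]
          rintro w ⟨j, rfl⟩
          exact sub_mem (Submodule.subset_span ⟨↑j, rfl⟩)
            (Submodule.smul_mem _ _ (Submodule.subset_span ⟨v, rfl⟩))
        · rw [Submodule.span_singleton_le_iff_mem]
          exact Submodule.subset_span ⟨v, rfl⟩
      have hrank : finrank ℝ S' + 1 ≤ finrank ℝ S := by
        rw [← finrank_sup_span_singleton S' hbvS' hbv0]
        exact Submodule.finrank_mono hle
      -- cardinalities
      have hccard : Fintype.card ι' = Fintype.card ι - 1 := by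
        have h1 : Fintype.card {z : ι // z = v} = 1 := Fintype.card_subtype_eq v
        have := Fintype.card_subtype_compl (fun z : ι => z = v)
        rw [h1] at this
        exact this
      have hpos : 1 ≤ Fintype.card ι := Fintype.card_pos_iff.mpr ⟨v⟩
      have hcc : Nat.card G'.ConnectedComponent = Nat.card G.ConnectedComponent :=
        card_cc_erase_leaf hadj hdeg
      have hIH := ih ι' inferInstance inferInstance (by omega) G' hG' κ inferInstance b' hpat'
      rw [hcc, ← hS'] at hIH
      rw [hccard] at hIH
      omega
lemma rank_add_ker {n : ℕ} (A : Matrix (Fin n) (Fin n) ℝ) :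
    A.rank + finrank ℝ (LinearMap.ker A.mulVecLin) = n := by
  have h := LinearMap.finrank_range_add_finrank_ker A.mulVecLin
  rwa [Module.finrank_fin_fun] at h

lemma rank_ge_of_acyclic {n : ℕ} {G : SimpleGraph (Fin n)} (hG : G.IsAcyclic)
    {A : Matrix (Fin n) (Fin n) ℝ} (hS : SMat G A) (hP : A.PosSemidef) :
    n - Nat.card G.ConnectedComponent ≤ A.rank := by
  obtain ⟨B, rfl⟩ : ∃ B : Matrix (Fin n) (Fin n) ℝ, A = Bᴴ * B :=
    by open scoped MatrixOrder in exact CStarAlgebra.nonneg_iff_eq_star_mul_self.mp hP.nonneg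
  have hrank : (Bᴴ * B).rank = B.rank := Matrix.rank_conjTranspose_mul_self B
  have hcols : B.rank = finrank ℝ (Submodule.span ℝ (Set.range Bᵀ)) :=
    Matrix.rank_eq_finrank_span_cols B
  have hentry : ∀ i j, (Bᵀ i) ⬝ᵥ (Bᵀ j) = (Bᴴ * B) i j := by
    intro i j
    simp [Matrix.mul_apply, Matrix.conjTranspose_apply, dotProduct, Matrix.transpose_apply,
      mul_comm]
  have key := gram_card_le n (Fin n) inferInstance inferInstance (by simp) G hG
    (Fin n) inferInstance Bᵀ (by
      intro i j hij
      rw [hentry]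
      exact hS.2 i j hij)
  rw [Fintype.card_fin, ← hcols, ← hrank] at key
  omega
open scoped RealInnerProductSpace in
lemma exists_solution {n : ℕ} {M : Matrix (Fin n) (Fin n) ℝ} (hM : M.IsHermitian)
    {y : Fin n → ℝ} (hy : ∀ z, M *ᵥ z = 0 → y ⬝ᵥ z = 0) : ∃ x, M *ᵥ x = y := by
  classical
  set T := Matrix.toEuclideanLin M with hT
  have hsymm : T.IsSymmetric := (Matrix.isHermitian_iff_isSymmetric).mp hM
  have hkerv : ∀ z : EuclideanSpace ℝ (Fin n), z ∈ LinearMap.ker T →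
      M *ᵥ ((WithLp.equiv 2 (Fin n → ℝ)) z) = 0 := by
    intro z hz
    have h1 : T z = 0 := hz
    have h2 : (WithLp.equiv 2 (Fin n → ℝ)) (T z) = M *ᵥ ((WithLp.equiv 2 (Fin n → ℝ)) z) :=
      Matrix.ofLp_toEuclideanLin_apply M z
    rw [h1] at h2
    simpa using h2.symm
  have hle : LinearMap.range T ≤ (LinearMap.ker T)ᗮ := by
    rintro _ ⟨x, rfl⟩
    rw [Submodule.mem_orthogonal]
    intro z hz
    have h1 : ⟪T z, x⟫ = ⟪z, T x⟫ := hsymm z x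
    rw [LinearMap.mem_ker.mp hz] at h1
    rw [← h1, inner_zero_left]
  have heq : LinearMap.range T = (LinearMap.ker T)ᗮ := by
    apply Submodule.eq_of_le_of_finrank_le hle
    have h1 := LinearMap.finrank_range_add_finrank_ker T
    have h2 := Submodule.finrank_add_finrank_orthogonal (K := LinearMap.ker T)
    rw [finrank_euclideanSpace_fin] at h1 h2
    omega
  set ye : EuclideanSpace ℝ (Fin n) := (WithLp.equiv 2 (Fin n → ℝ)).symm y with hye
  have hmem : ye ∈ (LinearMap.ker T)ᗮ := by
    rw [Submodule.mem_orthogonal]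
    intro z hz
    have h3 := hy _ (hkerv z hz)
    rw [PiLp.inner_apply]
    simp only [RCLike.inner_apply, starRingEnd_apply, star_trivial]
    rw [dotProduct] at h3
    rw [← h3]
    apply Finset.sum_congr rfl
    intro i _
    simp [hye, mul_comm, WithLp.equiv_symm_apply, PiLp.toLp_apply]
  rw [← heq] at hmem
  obtain ⟨x, hx⟩ := hmem
  refine ⟨(WithLp.equiv 2 (Fin n → ℝ)) x, ?_⟩
  have h2 : (WithLp.equiv 2 (Fin n → ℝ)) (T x) = M *ᵥ ((WithLp.equiv 2 (Fin n → ℝ)) x) :=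
    Matrix.ofLp_toEuclideanLin_apply M x
  rw [hx] at h2
  rw [← h2]
  simp [hye]
lemma mulVecLin_eq_toLin' {n : ℕ} (A : Matrix (Fin n) (Fin n) ℝ) :
    A.mulVecLin = Matrix.toLin' A := by
  apply LinearMap.ext
  intro v
  rw [Matrix.mulVecLin_apply, Matrix.toLin'_apply]

lemma lap_mem {n : ℕ} (G : SimpleGraph (Fin n)) [DecidableRel G.Adj] :
    ∃ A : Matrix (Fin n) (Fin n) ℝ, SMat G A ∧ A.PosSemidef ∧
      A.rank + Nat.card G.ConnectedComponent = n := by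
  classical
  refine ⟨G.lapMatrix ℝ, ⟨isSymm_lapMatrix ℝ G, ?_⟩, posSemidef_lapMatrix ℝ G, ?_⟩
  · intro i j hij
    simp only [lapMatrix, degMatrix, adjMatrix, Matrix.sub_apply,
      Matrix.diagonal_apply_ne _ hij, Matrix.of_apply]
    split_ifs with h <;> simp [h]
  · have h1 := rank_add_ker (G.lapMatrix ℝ)
    have h2 : Nat.card G.ConnectedComponent
        = finrank ℝ (LinearMap.ker (G.lapMatrix ℝ).mulVecLin) := by
      rw [Nat.card_eq_fintype_card, card_connectedComponent_eq_finrank_ker_toLin'_lapMatrix,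
        mulVecLin_eq_toLin']
    omega
lemma cyclic_low_rank {n : ℕ} {G : SimpleGraph (Fin n)} (h : ¬ G.IsAcyclic) :
    ∃ A : Matrix (Fin n) (Fin n) ℝ, SMat G A ∧ A.PosSemidef ∧
      A.rank + Nat.card G.ConnectedComponent + 1 ≤ n := by
  classical
  rw [isAcyclic_iff_forall_adj_isBridge] at h
  push_neg at h
  obtain ⟨p, r, hadj, hnb⟩ := h
  have hre : (G \ fromEdgeSet {s(p,r)}).Reachable p r := by
    by_contra h'
    exact hnb (isBridge_iff.mpr h')
  set G₀ := G \ fromEdgeSet {s(p,r)} with hG₀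
  have hG₀adj : ∀ i j : Fin n, G₀.Adj i j ↔ (G.Adj i j ∧ s(i,j) ≠ s(p,r)) := by
    intro i j
    rw [hG₀, sdiff_adj, fromEdgeSet_adj]
    constructor
    · rintro ⟨h1, h2⟩
      refine ⟨h1, fun hf => h2 ⟨by simp [hf], h1.ne⟩⟩
    · rintro ⟨h1, h2⟩
      exact ⟨h1, fun hf => h2 (by simpa using hf.1)⟩
  have hpr : p ≠ r := hadj.ne
  set L := G₀.lapMatrix ℝ with hLdef
  have hLsd : L.PosSemidef := posSemidef_lapMatrix ℝ G₀
  set y : Fin n → ℝ := fun i => (if i = p then (1:ℝ) else 0) - (if i = r then 1 else 0) with hy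
  have hyp : y p = 1 := by simp [hy, hpr]
  have hyr : y r = -1 := by simp [hy, Ne.symm hpr]
  have hy0 : ∀ i, i ≠ p → i ≠ r → y i = 0 := by
    intro i h1 h2; simp [hy, h1, h2]
  have hyne : y ≠ 0 := by
    intro h0
    have := congrFun h0 p
    rw [hyp] at this
    simp at this
  have hydot : ∀ z : Fin n → ℝ, y ⬝ᵥ z = z p - z r := by
    intro z
    simp [hy, dotProduct, sub_mul, Finset.sum_sub_distrib, ite_mul]
  have hker : ∀ z : Fin n → ℝ, L *ᵥ z = 0 → z p = z r := by
    intro z hz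
    have h1 : Matrix.toLin' (G₀.lapMatrix ℝ) z = 0 := by
      rw [Matrix.toLin'_apply]; exact hz
    exact (lapMatrix_mulVec_eq_zero_iff_forall_reachable G₀).mp hz p r hre
  obtain ⟨x₀, hx₀⟩ : ∃ x, L *ᵥ x = y := by
    apply exists_solution hLsd.1
    intro z hz
    rw [hydot, hker z hz, sub_self]
  set c := y ⬝ᵥ x₀ with hc
  have hsymmdot : ∀ u w : Fin n → ℝ, u ⬝ᵥ (L *ᵥ w) = w ⬝ᵥ (L *ᵥ u) := by
    intro u w
    have hLsymm : Lᵀ = L := isSymm_lapMatrix ℝ G₀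
    have hvm : u ᵥ* L = L *ᵥ u := by
      conv_lhs => rw [← hLsymm]
      exact Matrix.vecMul_transpose L u
    rw [Matrix.dotProduct_mulVec, hvm, dotProduct_comm]
  have hLq : ∀ w : Fin n → ℝ, 0 ≤ w ⬝ᵥ (L *ᵥ w) := by
    intro w
    have := hLsd.dotProduct_mulVec_nonneg w
    simpa using this
  have hcval : c = x₀ ⬝ᵥ (L *ᵥ x₀) := by rw [hc, hx₀, dotProduct_comm]
  have hcne : c ≠ 0 := by
    intro h0
    have hq : x₀ ⬝ᵥ (L *ᵥ x₀) = 0 := by rw [← hcval, h0]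
    have hstar : star x₀ ⬝ᵥ (L *ᵥ x₀) = 0 := by simpa using hq
    have := (hLsd.dotProduct_mulVec_zero_iff x₀).mp hstar
    rw [hx₀] at this
    exact hyne this
  have hcpos : 0 < c := lt_of_le_of_ne (hcval ▸ hLq x₀) (Ne.symm hcne)
  set A := L - c⁻¹ • Matrix.vecMulVec y y with hA
  have hAentry : ∀ i j, A i j = L i j - c⁻¹ * (y i * y j) := by
    intro i j
    simp [hA, Matrix.sub_apply, Matrix.smul_apply, Matrix.vecMulVec_apply, smul_eq_mul]
  have hLentry : ∀ i j : Fin n, i ≠ j → L i j = -(if G₀.Adj i j then (1:ℝ) else 0) := by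
    intro i j hij
    simp [hLdef, lapMatrix, degMatrix, adjMatrix, Matrix.sub_apply,
      Matrix.diagonal_apply_ne _ hij]
  have hAmul : ∀ z : Fin n → ℝ, A *ᵥ z = L *ᵥ z - (c⁻¹ * (y ⬝ᵥ z)) • y := by
    intro z
    rw [hA, Matrix.sub_mulVec, Matrix.smul_mulVec]
    congr 1
    ext k
    simp only [Pi.smul_apply, smul_eq_mul, Matrix.mulVec, Matrix.vecMulVec_apply, dotProduct,
      Finset.mul_sum, Finset.sum_mul]
    apply Finset.sum_congr rfl
    intro j _
    ring
  have hAsymm : A.IsSymm := by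
    apply Matrix.IsSymm.sub (isSymm_lapMatrix ℝ G₀)
    apply Matrix.IsSymm.smul
    ext i j
    simp [Matrix.transpose_apply, Matrix.vecMulVec_apply, mul_comm]
  -- PSD
  have hAq : ∀ z : Fin n → ℝ, 0 ≤ z ⬝ᵥ (A *ᵥ z) := by
    intro z
    set s := y ⬝ᵥ z with hs
    have hzy : z ⬝ᵥ y = s := dotProduct_comm z y
    have h2 : x₀ ⬝ᵥ (L *ᵥ z) = s := by rw [hsymmdot x₀ z, hx₀, hzy]
    have h3 : x₀ ⬝ᵥ y = c := by rw [dotProduct_comm, hc]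
    have expand : (z - (s/c) • x₀) ⬝ᵥ (L *ᵥ (z - (s/c) • x₀))
        = z ⬝ᵥ (L *ᵥ z) - c⁻¹ * s * s := by
      rw [Matrix.mulVec_sub, Matrix.mulVec_smul, hx₀, sub_dotProduct, dotProduct_sub,
        dotProduct_sub, smul_dotProduct, smul_dotProduct, dotProduct_smul, dotProduct_smul,
        hzy, h2, h3]
      simp only [smul_eq_mul]
      field_simp
      ring
    have hineq := hLq (z - (s/c) • x₀)
    rw [expand] at hineq
    rw [hAmul, dotProduct_sub, dotProduct_smul, smul_eq_mul, hzy, ← hs]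
    linarith
  have hAherm : A.IsHermitian := by
    rw [Matrix.IsHermitian, Matrix.conjTranspose_eq_transpose_of_trivial]
    exact hAsymm
  have hApsd : A.PosSemidef := by
    refine Matrix.PosSemidef.of_dotProduct_mulVec_nonneg hAherm (fun z => ?_)
    have := hAq z
    simpa using this
  -- pattern
  have hSmat : SMat G A := by
    refine ⟨hAsymm, fun i j hij => ?_⟩
    by_cases hs : s(i, j) = s(p, r)
    · have hGadj : G.Adj i j := by
        rw [Sym2.eq_iff] at hs
        rcases hs with ⟨rfl, rfl⟩ | ⟨rfl, rfl⟩
        · exact hadj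
        · exact hadj.symm
      have hG₀na : ¬ G₀.Adj i j := by
        rw [hG₀adj]
        rintro ⟨-, hne⟩
        exact hne hs
      have hyij : y i * y j = -1 := by
        rw [Sym2.eq_iff] at hs
        rcases hs with ⟨rfl, rfl⟩ | ⟨rfl, rfl⟩
        · rw [hyp, hyr]; ring
        · rw [hyr, hyp]; ring
      rw [hAentry, hLentry i j hij, hyij, if_neg hG₀na]
      constructor
      · intro _; exact hGadj
      · intro _
        have : -(0:ℝ) - c⁻¹ * (-1) = c⁻¹ := by ring
        rw [this]
        exact ne_of_gt (inv_pos.mpr hcpos)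
    · have hyij : y i * y j = 0 := by
        by_cases hip : i = p
        · subst hip
          have hjr : j ≠ r := by
            intro hjr; subst hjr; exact hs rfl
          rw [hy0 j (Ne.symm hij) hjr, mul_zero]
        · by_cases hir : i = r
          · subst hir
            have hjp : j ≠ p := by
              intro hjp; subst hjp
              exact hs (Sym2.eq_swap)
            rw [hy0 j hjp (Ne.symm hij), mul_zero]
          · rw [hy0 i hip hir, zero_mul]
      rw [hAentry, hyij, hLentry i j hij]
      have hG₀iff : G₀.Adj i j ↔ G.Adj i j := by
        rw [hG₀adj]
        exact ⟨fun h => h.1, fun h => ⟨h, hs⟩⟩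
      rw [← hG₀iff]
      split_ifs with hadj₀ <;> simp [hadj₀]
  -- rank bound
  have hccG₀ : Nat.card G₀.ConnectedComponent = Nat.card G.ConnectedComponent :=
    card_cc_deleteEdge hre
  have hkerL : finrank ℝ (LinearMap.ker L.mulVecLin) = Nat.card G.ConnectedComponent := by
    rw [← hccG₀, Nat.card_eq_fintype_card, card_connectedComponent_eq_finrank_ker_toLin'_lapMatrix,
      mulVecLin_eq_toLin']
  have hx₀ker : x₀ ∉ LinearMap.ker L.mulVecLin := by
    intro hmem
    rw [LinearMap.mem_ker, Matrix.mulVecLin_apply, hx₀] at hmem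
    exact hyne hmem
  have hx₀ne : x₀ ≠ 0 := by
    intro h0
    apply hyne
    rw [← hx₀, h0, Matrix.mulVec_zero]
  have hsub : LinearMap.ker L.mulVecLin ⊔ (ℝ ∙ x₀) ≤ LinearMap.ker A.mulVecLin := by
    apply sup_le
    · intro z hz
      rw [LinearMap.mem_ker, Matrix.mulVecLin_apply] at hz ⊢
      rw [hAmul, hz, hydot, hker z hz, sub_self, mul_zero, zero_smul, sub_zero]
    · rw [Submodule.span_singleton_le_iff_mem, LinearMap.mem_ker, Matrix.mulVecLin_apply,
        hAmul, hx₀, ← hc, mul_comm, mul_inv_cancel₀ hcne, one_smul, sub_self]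
  have hfr : Nat.card G.ConnectedComponent + 1 ≤ finrank ℝ (LinearMap.ker A.mulVecLin) := by
    have h1 := finrank_sup_span_singleton (LinearMap.ker L.mulVecLin) hx₀ker hx₀ne
    have h2 := Submodule.finrank_mono hsub
    rw [h1, hkerL] at h2
    exact h2
  have h3 := rank_add_ker A
  exact ⟨A, hSmat, hApsd, by omega⟩
/-- mr₊(G) = n − (number of components) if and only if G is a forest. -/
theorem stmt9 {n : ℕ} (G : SimpleGraph (Fin n)) (ℓ : ℕ)
    (hl : ℓ = Nat.card G.ConnectedComponent) :
    mrPlus G = n - ℓ ↔ G.IsAcyclic := by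
  classical
  subst hl
  constructor
  · intro hmr
    by_contra hcyc
    obtain ⟨A, hS, hP, hA⟩ := cyclic_low_rank hcyc
    have hmem : A.rank ∈ {r | ∃ B : Matrix (Fin n) (Fin n) ℝ,
        SMat G B ∧ B.PosSemidef ∧ B.rank = r} := ⟨A, hS, hP, rfl⟩
    have hle : mrPlus G ≤ A.rank := Nat.sInf_le hmem
    rw [hmr] at hle
    omega
  · intro hac
    obtain ⟨A, hS, hP, hA⟩ := lap_mem G
    have hmem : A.rank ∈ {r | ∃ B : Matrix (Fin n) (Fin n) ℝ,
        SMat G B ∧ B.PosSemidef ∧ B.rank = r} := ⟨A, hS, hP, rfl⟩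
    apply le_antisymm
    · have h1 : mrPlus G ≤ A.rank := Nat.sInf_le hmem
      omega
    · obtain ⟨A', hS', hP', hr'⟩ := Nat.sInf_mem (⟨A.rank, hmem⟩ : Set.Nonempty _)
      have h2 : n - Nat.card G.ConnectedComponent ≤ A'.rank :=
        rank_ge_of_acyclic hac hS' hP'
      rw [hr'] at h2
      exact h2
end
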